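/- Define F̃ : ℕ → ℕ recursively by F̃(N) = F̃(⌊N/3 + log₂(N) + 1⌋) + 1 for N > 8 and F̃(N) = 1 for N ≤ 8. Then F̃(N) = log₃(N) + O(1); that is, there exists a constant C such that |F̃(N) − log₃(N)| ≤ C for all N ≥ 2. -/

import Mathlib

open Real

private lemma sqrt_le_div' {a x : ℝ} (ha : 0 < a) (h : a^2 ≤ x) : Real.sqrt x ≤ x / a := by
  have hx : 0 ≤ x := le_trans (sq_nonneg a) h
  have ha' : a ≤ Real.sqrt x := by
    have := Real.sqrt_le_sqrt h
    rwa [Real.sqrt_sq ha.le] at this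
  rw [le_div_iff₀ ha]
  calc Real.sqrt x * a ≤ Real.sqrt x * Real.sqrt x :=
        mul_le_mul_of_nonneg_left ha' (Real.sqrt_nonneg x)
    _ = x := Real.mul_self_sqrt hx

private lemma log2_le_sqrt {N : ℝ} (hN : 1 ≤ N) : Real.logb 2 N ≤ 3 * Real.sqrt N := by
  have hs : 0 < Real.sqrt N := Real.sqrt_pos.2 (by linarith)
  have h1 : Real.log N ≤ 2 * Real.sqrt N := by
    have h2 := Real.log_le_sub_one_of_pos hs
    have h3 : Real.log (Real.sqrt N) = Real.log N / 2 := Real.log_sqrt (by linarith)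
    linarith
  have hlog2 : (2:ℝ)/3 ≤ Real.log 2 := by
    have := Real.log_two_gt_d9; linarith
  have hN0 : 0 ≤ Real.log N := Real.log_nonneg hN
  have : Real.logb 2 N ≤ (2 * Real.sqrt N) / ((2:ℝ)/3) := by
    unfold Real.logb
    exact div_le_div₀ (by positivity) h1 (by norm_num) hlog2
  calc Real.logb 2 N ≤ (2 * Real.sqrt N) / ((2:ℝ)/3) := this
    _ = 3 * Real.sqrt N := by ring

private lemma one_le_log3 : 1 ≤ Real.log 3 := by
  rw [Real.le_log_iff_exp_le (by norm_num : (0:ℝ) < 3)]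
  have := Real.exp_one_lt_d9
  linarith

private lemma logb3_le_sub_one {x : ℝ} (hx : 1 ≤ x) : Real.logb 3 x ≤ x - 1 := by
  have h1 : Real.log x ≤ x - 1 := Real.log_le_sub_one_of_pos (by linarith)
  have h2 : Real.logb 3 x ≤ Real.log x := by
    unfold Real.logb
    exact div_le_self (Real.log_nonneg hx) one_le_log3
  linarith
open Real

private lemma logb2_mono {x y : ℝ} (hx : 0 < x) (hxy : x ≤ y) : Real.logb 2 x ≤ Real.logb 2 y :=
  Real.logb_le_logb_of_le (by norm_num) hx hxy

private lemma gx_lt (N : ℕ) (hN : 9 ≤ N) : (N:ℝ)/3 + Real.logb 2 N + 1 < N := by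
  have hN1 : (9:ℝ) ≤ (N:ℝ) := by exact_mod_cast hN
  by_cases h16 : N ≤ 16
  · have h16' : (N:ℝ) ≤ 16 := by exact_mod_cast h16
    have : Real.logb 2 N ≤ 4 := by
      have h := logb2_mono (by linarith : (0:ℝ) < N) h16'
      have : Real.logb 2 16 = 4 := by
        rw [show (16:ℝ) = 2^(4:ℕ) by norm_num, Real.logb_pow,
          Real.logb_self_eq_one (by norm_num)]
        norm_num
      linarith
    linarith
  · push_neg at h16
    by_cases h32 : N ≤ 32
    · have h32' : (N:ℝ) ≤ 32 := by exact_mod_cast h32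
      have h17 : (17:ℝ) ≤ (N:ℝ) := by exact_mod_cast h16
      have : Real.logb 2 N ≤ 5 := by
        have h := logb2_mono (by linarith : (0:ℝ) < N) h32'
        have : Real.logb 2 32 = 5 := by
          rw [show (32:ℝ) = 2^(5:ℕ) by norm_num, Real.logb_pow,
            Real.logb_self_eq_one (by norm_num)]
          norm_num
        linarith
      linarith
    · push_neg at h32
      have h33 : (33:ℝ) ≤ (N:ℝ) := by exact_mod_cast h32
      have hlog : Real.logb 2 N ≤ 3 * Real.sqrt N := log2_le_sqrt (by linarith)
      have hsq : Real.sqrt (N:ℝ) ≤ N / 5 := sqrt_le_div' (by norm_num) (by nlinarith)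
      linarith
open Real

private lemma gx_nonneg (N : ℕ) (hN : 1 ≤ N) : 0 ≤ (N:ℝ)/3 + Real.logb 2 N + 1 := by
  have h1 : (1:ℝ) ≤ (N:ℝ) := by exact_mod_cast hN
  have := Real.logb_nonneg (by norm_num : (1:ℝ) < 2) h1
  positivity

-- the floor is < N
private lemma g_lt (N : ℕ) (hN : 9 ≤ N) :
    Nat.floor ((N : ℝ) / 3 + Real.logb 2 N + 1) < N := by
  rw [Nat.floor_lt (gx_nonneg N (by omega))]
  exact gx_lt N hN

-- the floor is > N/3 (as a real), hence ≥ 4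
private lemma g_gt (N : ℕ) (hN : 9 ≤ N) :
    (N:ℝ)/3 < (Nat.floor ((N : ℝ) / 3 + Real.logb 2 N + 1) : ℝ) := by
  have h1 : (1:ℝ) ≤ (N:ℝ) := by
    have : (9:ℝ) ≤ (N:ℝ) := by exact_mod_cast hN
    linarith
  have h2 := Nat.sub_one_lt_floor ((N : ℝ) / 3 + Real.logb 2 N + 1)
  have h3 := Real.logb_nonneg (by norm_num : (1:ℝ) < 2) h1
  linarith

private lemma g_ge4 (N : ℕ) (hN : 9 ≤ N) :
    4 ≤ Nat.floor ((N : ℝ) / 3 + Real.logb 2 N + 1) := by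
  have h := g_gt N hN
  have hN' : (9:ℝ) ≤ (N:ℝ) := by exact_mod_cast hN
  have : (3:ℝ) < (Nat.floor ((N : ℝ) / 3 + Real.logb 2 N + 1) : ℝ) := by linarith
  exact_mod_cast this

private lemma g_le (N : ℕ) (hN : 1 ≤ N) :
    (Nat.floor ((N : ℝ) / 3 + Real.logb 2 N + 1) : ℝ) ≤ (N:ℝ)/3 + 3 * Real.sqrt N + 1 := by
  have h1 : (1:ℝ) ≤ (N:ℝ) := by exact_mod_cast hN
  have h2 := Nat.floor_le (gx_nonneg N hN)
  have h3 := log2_le_sqrt h1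
  linarith

-- trivial bound F N ≤ N + 1
private lemma F_triv (F : ℕ → ℕ)
    (h1 : ∀ N : ℕ, N ≤ 8 → F N = 1)
    (h2 : ∀ N : ℕ, 8 < N →
      F N = F (Nat.floor ((N : ℝ) / 3 + Real.logb 2 N + 1)) + 1) :
    ∀ N : ℕ, F N ≤ N + 1 := by
  intro N
  induction N using Nat.strong_induction_on with
  | _ N ih =>
    by_cases h : N ≤ 8
    · rw [h1 N h]; omega
    · push_neg at h
      rw [h2 N h]
      have hlt := g_lt N h
      have := ih _ hlt
      omega

-- lower bound
private lemma F_lower (F : ℕ → ℕ)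
    (h1 : ∀ N : ℕ, N ≤ 8 → F N = 1)
    (h2 : ∀ N : ℕ, 8 < N →
      F N = F (Nat.floor ((N : ℝ) / 3 + Real.logb 2 N + 1)) + 1) :
    ∀ N : ℕ, 2 ≤ N → Real.logb 3 N - 2 ≤ (F N : ℝ) := by
  intro N
  induction N using Nat.strong_induction_on with
  | _ N ih =>
    intro hN2
    by_cases h : N ≤ 8
    · rw [h1 N h]
      have h8 : (N:ℝ) ≤ 27 := by
        have : (N:ℝ) ≤ 8 := by exact_mod_cast h
        linarith
      have hpos : (0:ℝ) < N := by positivity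
      have hm : Real.logb 3 N ≤ Real.logb 3 27 :=
        Real.logb_le_logb_of_le (by norm_num) hpos h8
      have h27 : Real.logb 3 27 = 3 := by
        rw [show (27:ℝ) = 3^(3:ℕ) by norm_num, Real.logb_pow,
          Real.logb_self_eq_one (by norm_num)]
        norm_num
      push_cast
      linarith
    · push_neg at h
      set M := Nat.floor ((N : ℝ) / 3 + Real.logb 2 N + 1) with hM
      have hlt : M < N := g_lt N h
      have hge : 4 ≤ M := g_ge4 N h
      have hgt : (N:ℝ)/3 < (M:ℝ) := g_gt N h
      have ihM := ih M hlt (by omega)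
      rw [h2 N h]
      -- logb 3 N ≤ logb 3 (3*M) = 1 + logb 3 M
      have hNle : (N:ℝ) ≤ 3 * M := by linarith
      have hNpos : (0:ℝ) < N := by
        have : (9:ℝ) ≤ (N:ℝ) := by exact_mod_cast h
        linarith
      have hmono : Real.logb 3 N ≤ Real.logb 3 (3 * M) :=
        Real.logb_le_logb_of_le (by norm_num) hNpos hNle
      have hmul : Real.logb 3 ((3:ℝ) * M) = 1 + Real.logb 3 M := by
        rw [Real.logb_mul (by norm_num) (by positivity),
          Real.logb_self_eq_one (by norm_num)]
      push_cast
      linarith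

set_option maxHeartbeats 1000000 in
-- upper bound
private lemma F_upper (F : ℕ → ℕ)
    (h1 : ∀ N : ℕ, N ≤ 8 → F N = 1)
    (h2 : ∀ N : ℕ, 8 < N →
      F N = F (Nat.floor ((N : ℝ) / 3 + Real.logb 2 N + 1)) + 1) :
    ∀ N : ℕ, 2 ≤ N → (F N : ℝ) ≤ Real.logb 3 N + 2540 - 30 / Real.sqrt N := by
  intro N
  induction N using Nat.strong_induction_on with
  | _ N ih =>
    intro hN2
    have hN2' : (2:ℝ) ≤ (N:ℝ) := by exact_mod_cast hN2
    have hNpos : (0:ℝ) < N := by linarith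
    have hs1 : (1:ℝ) ≤ Real.sqrt N := by
      rw [show (1:ℝ) = Real.sqrt 1 by simp]
      exact Real.sqrt_le_sqrt (by linarith)
    have hlogN : 0 ≤ Real.logb 3 N := Real.logb_nonneg (by norm_num) (by linarith)
    by_cases h : N ≤ 2500
    · have hF := F_triv F h1 h2 N
      have hF' : (F N : ℝ) ≤ 2501 := by
        have : (F N : ℝ) ≤ (N:ℝ) + 1 := by exact_mod_cast hF
        have : (N:ℝ) ≤ 2500 := by exact_mod_cast h
        linarith [show (F N:ℝ) ≤ (N:ℝ)+1 by exact_mod_cast hF]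
      have h30 : 30 / Real.sqrt N ≤ 30 := by
        rw [div_le_iff₀ (by linarith)]
        nlinarith
      linarith
    · push_neg at h
      have h9 : 9 ≤ N := by omega
      have hNbig : (2500:ℝ) ≤ (N:ℝ) := by
        have : (2501:ℝ) ≤ (N:ℝ) := by exact_mod_cast h
        linarith
      set M := Nat.floor ((N : ℝ) / 3 + Real.logb 2 N + 1) with hM
      have hlt : M < N := g_lt N h9
      have hge : 4 ≤ M := g_ge4 N h9
      have hgt : (N:ℝ)/3 < (M:ℝ) := g_gt N h9
      have hle : (M:ℝ) ≤ (N:ℝ)/3 + 3 * Real.sqrt N + 1 := g_le N (by omega)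
      have ihM := ih M hlt (by omega)
      rw [h2 N h9]
      set s := Real.sqrt N with hs
      have hspos : 0 < s := by linarith
      have hssq : s^2 = (N:ℝ) := Real.sq_sqrt (by linarith)
      -- s ≤ N / 50
      have hsN : s ≤ (N:ℝ)/50 := sqrt_le_div' (by norm_num) (by linarith)
      -- 3M ≤ N + 12 s
      have h3M : 3 * (M:ℝ) ≤ (N:ℝ) + 12 * s := by linarith
      -- M ≤ 2N/5
      have hM25 : (M:ℝ) ≤ 2 * (N:ℝ) / 5 := by linarith
      -- (c): logb 3 (3M) ≤ logb 3 N + 12/s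
      have hMpos : (0:ℝ) < (M:ℝ) := by positivity
      have hr1 : (1:ℝ) ≤ 3 * (M:ℝ) / N := by
        rw [le_div_iff₀ hNpos]; linarith
      have hc : Real.logb 3 (3 * (M:ℝ) / N) ≤ 12 / s := by
        have := logb3_le_sub_one hr1
        have hrat : 3 * (M:ℝ) / N - 1 ≤ 12 / s := by
          rw [div_sub' (ne_of_gt hNpos), div_le_div_iff₀ hNpos hspos]
          nlinarith
        linarith
      have hdiv : Real.logb 3 (3 * (M:ℝ) / N) =
          Real.logb 3 (3 * (M:ℝ)) - Real.logb 3 N := by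
        rw [Real.logb_div (by positivity) (ne_of_gt hNpos)]
      have hmul : Real.logb 3 ((3:ℝ) * M) = 1 + Real.logb 3 M := by
        rw [Real.logb_mul (by norm_num) (ne_of_gt hMpos),
          Real.logb_self_eq_one (by norm_num)]
      -- (d): 45 / s ≤ 30 / sqrt M
      have hsM : 0 < Real.sqrt (M:ℝ) := Real.sqrt_pos.2 hMpos
      have hsMle : Real.sqrt (M:ℝ) ≤ (2/3) * s := by
        have h1 : Real.sqrt (M:ℝ) ≤ Real.sqrt ((2/3*s)^2) := by
          apply Real.sqrt_le_sqrt
          nlinarith [hssq]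
        rwa [Real.sqrt_sq (by positivity)] at h1
      have hd : 45 / s ≤ 30 / Real.sqrt (M:ℝ) := by
        rw [div_le_div_iff₀ hspos hsM]
        linarith
      -- combine
      have hkey : Real.logb 3 M + 1 - 30 / Real.sqrt M ≤ Real.logb 3 N - 30 / s := by
        have : Real.logb 3 M + 1 ≤ Real.logb 3 N + 12 / s := by
          have := hc
          rw [hdiv, hmul] at this
          linarith
        have h45 : -(30 / Real.sqrt (M:ℝ)) ≤ -(45 / s) := by linarith
        have h12 : 12 / s - 45 / s ≤ -(30 / s) := by
          have h3 : 0 ≤ 3 / s := by positivity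
          have he : 12 / s - 45 / s + 30 / s = -(3 / s) := by ring
          linarith
        linarith
      push_cast
      linarith

/-- If `F̃` satisfies the recursion `F̃(N) = F̃(⌊N/3 + log₂(N) + 1⌋) + 1` for `N > 8`
and `F̃(N) = 1` for `N ≤ 8`, then `F̃(N) = log₃(N) + O(1)`: there is a constant `C`
with `|F̃(N) − log₃(N)| ≤ C` for all `N ≥ 2`. -/
theorem Ftilde_eq_log3_add_O1 (F : ℕ → ℕ)
    (h1 : ∀ N : ℕ, N ≤ 8 → F N = 1)
    (h2 : ∀ N : ℕ, 8 < N →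
      F N = F (Nat.floor ((N : ℝ) / 3 + Real.logb 2 N + 1)) + 1) :
    ∃ C : ℝ, ∀ N : ℕ, 2 ≤ N → |(F N : ℝ) - Real.logb 3 N| ≤ C := by
  refine ⟨2540, fun N hN => ?_⟩
  have hlo := F_lower F h1 h2 N hN
  have hhi := F_upper F h1 h2 N hN
  have hs : 0 < Real.sqrt N := Real.sqrt_pos.2 (by positivity)
  have : 0 ≤ 30 / Real.sqrt N := by positivity
  rw [abs_le]
  constructor <;> linarith
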